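/- For every primitive vector (p,q) ∈ ℤ² (gcd(p,q) = 1), there exists a finite sequence of multiplications by the matrices U² = [[1,2],[0,1]], U⁻², L² = [[1,0],[2,1]], L⁻² taking (p,q) to one of the vectors (0,1), (0,-1), (1,0), (-1,0), (1,1), (1,-1), (-1,1), (-1,-1). -/

import Mathlib

open Matrix

/-- `U² = [[1,2],[0,1]]` in `SL₂(ℤ)`. -/
def U2 : Matrix.SpecialLinearGroup (Fin 2) ℤ :=
  ⟨!![1, 2; 0, 1], by norm_num [Matrix.det_fin_two_of]⟩

/-- `L² = [[1,0],[2,1]]` in `SL₂(ℤ)`. -/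
def L2 : Matrix.SpecialLinearGroup (Fin 2) ℤ :=
  ⟨!![1, 0; 2, 1], by norm_num [Matrix.det_fin_two_of]⟩

def U2i : Matrix.SpecialLinearGroup (Fin 2) ℤ :=
  ⟨!![1, -2; 0, 1], by norm_num [Matrix.det_fin_two_of]⟩

def L2i : Matrix.SpecialLinearGroup (Fin 2) ℤ :=
  ⟨!![1, 0; -2, 1], by norm_num [Matrix.det_fin_two_of]⟩

lemma U2i_eq : U2i = U2⁻¹ := by
  apply eq_inv_of_mul_eq_one_left
  ext i j
  fin_cases i <;> fin_cases j <;>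
    rfl

lemma L2i_eq : L2i = L2⁻¹ := by
  apply eq_inv_of_mul_eq_one_left
  ext i j
  fin_cases i <;> fin_cases j <;>
    rfl

lemma mulVec_U2 (p q : ℤ) : (U2 : Matrix (Fin 2) (Fin 2) ℤ).mulVec ![p, q] = ![p + 2*q, q] := by
  funext i; fin_cases i <;>
    simp [U2, Matrix.mulVec, dotProduct, Fin.sum_univ_succ] <;> ring

lemma mulVec_U2i (p q : ℤ) : (U2i : Matrix (Fin 2) (Fin 2) ℤ).mulVec ![p, q] = ![p - 2*q, q] := by
  funext i; fin_cases i <;>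
    simp [U2i, Matrix.mulVec, dotProduct, Fin.sum_univ_succ] <;> ring

lemma mulVec_L2 (p q : ℤ) : (L2 : Matrix (Fin 2) (Fin 2) ℤ).mulVec ![p, q] = ![p, q + 2*p] := by
  funext i; fin_cases i <;>
    simp [L2, Matrix.mulVec, dotProduct, Fin.sum_univ_succ] <;> ring

lemma mulVec_L2i (p q : ℤ) : (L2i : Matrix (Fin 2) (Fin 2) ℤ).mulVec ![p, q] = ![p, q - 2*p] := by
  funext i; fin_cases i <;>
    simp [L2i, Matrix.mulVec, dotProduct, Fin.sum_univ_succ] <;> ring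

def Goal (p q : ℤ) : Prop :=
  ∃ A ∈ Subgroup.closure ({U2, L2} : Set (Matrix.SpecialLinearGroup (Fin 2) ℤ)),
      A.1.mulVec ![p, q] = ![0, 1] ∨ A.1.mulVec ![p, q] = ![0, -1] ∨
      A.1.mulVec ![p, q] = ![1, 0] ∨ A.1.mulVec ![p, q] = ![-1, 0] ∨
      A.1.mulVec ![p, q] = ![1, 1] ∨ A.1.mulVec ![p, q] = ![1, -1] ∨
      A.1.mulVec ![p, q] = ![-1, 1] ∨ A.1.mulVec ![p, q] = ![-1, -1]

lemma goal_step (p q p' q' : ℤ) (B : Matrix.SpecialLinearGroup (Fin 2) ℤ)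
    (hB : B ∈ Subgroup.closure ({U2, L2} : Set (Matrix.SpecialLinearGroup (Fin 2) ℤ)))
    (hBv : (B : Matrix (Fin 2) (Fin 2) ℤ).mulVec ![p, q] = ![p', q'])
    (h : Goal p' q') : Goal p q := by
  obtain ⟨A, hA, hv⟩ := h
  refine ⟨A * B, Subgroup.mul_mem _ hA hB, ?_⟩
  have : ((A * B : Matrix.SpecialLinearGroup (Fin 2) ℤ) : Matrix (Fin 2) (Fin 2) ℤ).mulVec ![p, q]
      = (A : Matrix (Fin 2) (Fin 2) ℤ).mulVec ![p', q'] := by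
    rw [Matrix.SpecialLinearGroup.coe_mul, ← Matrix.mulVec_mulVec, hBv]
  rw [this]; exact hv

lemma goal_key : ∀ n : ℕ, ∀ p q : ℤ, p.natAbs + q.natAbs ≤ n → IsCoprime p q → Goal p q := by
  intro n
  induction n with
  | zero =>
    intro p q hn hc
    exfalso
    have hp : p = 0 := by omega
    have hq : q = 0 := by omega
    subst hp; subst hq
    exact not_isCoprime_zero_zero hc
  | succ n ih =>
    intro p q hn hc
    have hU : U2 ∈ Subgroup.closure ({U2, L2} : Set (Matrix.SpecialLinearGroup (Fin 2) ℤ)) :=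
      Subgroup.subset_closure (by simp)
    have hL : L2 ∈ Subgroup.closure ({U2, L2} : Set (Matrix.SpecialLinearGroup (Fin 2) ℤ)) :=
      Subgroup.subset_closure (by simp)
    have hUi : U2i ∈ Subgroup.closure ({U2, L2} : Set (Matrix.SpecialLinearGroup (Fin 2) ℤ)) := by
      rw [U2i_eq]; exact Subgroup.inv_mem _ hU
    have hLi : L2i ∈ Subgroup.closure ({U2, L2} : Set (Matrix.SpecialLinearGroup (Fin 2) ℤ)) := by
      rw [L2i_eq]; exact Subgroup.inv_mem _ hL
    by_cases hsmall : p.natAbs ≤ 1 ∧ q.natAbs ≤ 1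
    · -- base case
      refine ⟨1, Subgroup.one_mem _, ?_⟩
      have h1 : ((1 : Matrix.SpecialLinearGroup (Fin 2) ℤ) : Matrix (Fin 2) (Fin 2) ℤ).mulVec ![p, q] = ![p, q] := by
        simp
      rw [h1]
      have hne : ¬(p = 0 ∧ q = 0) := by
        rintro ⟨rfl, rfl⟩; exact not_isCoprime_zero_zero hc
      obtain ⟨hp1, hq1⟩ := hsmall
      have hpb : -1 ≤ p ∧ p ≤ 1 := by omega
      have hqb : -1 ≤ q ∧ q ≤ 1 := by omega
      obtain ⟨hpb1, hpb2⟩ := hpb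
      obtain ⟨hqb1, hqb2⟩ := hqb
      interval_cases p <;> interval_cases q <;> simp_all <;> decide
    · have hgcd : Int.gcd p q = 1 := Int.isCoprime_iff_gcd_eq_one.mp hc
      rcases lt_trichotomy p.natAbs q.natAbs with hlt | heq | hgt
      · -- reduce q
        have hp0 : p ≠ 0 := by
          rintro rfl
          have : q.natAbs = 1 := by
            simpa [Int.gcd] using hgcd
          omega
        have hstep : (q + 2*p).natAbs < q.natAbs ∨ (q - 2*p).natAbs < q.natAbs := by omega
        rcases hstep with h | h
        · refine goal_step p q p (q + 2*p) L2 hL (mulVec_L2 p q) (ih p (q + 2*p) (by omega) ?_)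
          have := hc.add_mul_left_right 2
          simpa [mul_comm] using this
        · refine goal_step p q p (q - 2*p) L2i hLi (mulVec_L2i p q) (ih p (q - 2*p) (by omega) ?_)
          have := hc.add_mul_left_right (-2)
          simpa [mul_comm, sub_eq_add_neg] using this
      · -- impossible: |p| = |q| and not both ≤ 1, but gcd = 1
        exfalso
        have : Nat.gcd p.natAbs q.natAbs = 1 := hgcd
        rw [heq, Nat.gcd_self] at this
        omega
      · -- reduce p
        have hq0 : q ≠ 0 := by
          rintro rfl
          have : p.natAbs = 1 := by
            simpa [Int.gcd] using hgcd
          omega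
        have hstep : (p + 2*q).natAbs < p.natAbs ∨ (p - 2*q).natAbs < p.natAbs := by omega
        have hc' : IsCoprime q p := hc.symm
        rcases hstep with h | h
        · refine goal_step p q (p + 2*q) q U2 hU (mulVec_U2 p q) (ih (p + 2*q) q (by omega) ?_)
          have := hc'.add_mul_left_right 2
          simpa [mul_comm] using this.symm
        · refine goal_step p q (p - 2*q) q U2i hUi (mulVec_U2i p q) (ih (p - 2*q) q (by omega) ?_)
          have := hc'.add_mul_left_right (-2)
          simpa [mul_comm, sub_eq_add_neg] using this.symm

theorem stmt19 (p q : ℤ) (hprim : IsCoprime p q) :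
    ∃ A ∈ Subgroup.closure ({U2, L2} : Set (Matrix.SpecialLinearGroup (Fin 2) ℤ)),
      A.1.mulVec ![p, q] = ![0, 1] ∨ A.1.mulVec ![p, q] = ![0, -1] ∨
      A.1.mulVec ![p, q] = ![1, 0] ∨ A.1.mulVec ![p, q] = ![-1, 0] ∨
      A.1.mulVec ![p, q] = ![1, 1] ∨ A.1.mulVec ![p, q] = ![1, -1] ∨
      A.1.mulVec ![p, q] = ![-1, 1] ∨ A.1.mulVec ![p, q] = ![-1, -1] := by
  exact goal_key (p.natAbs + q.natAbs) p q le_rfl hprim
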